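/- (Theorem 2, key inequality) Let t ≤ T−1 and suppose π_{s+1}⁺ ≤ π_s⁺ for all s ∈ {t,…,T−2}. Then for every ε ∈ (0, (T−t)·v̄], the expected value function satisfies V̄_t((T−t)·v̄ − ε) ≤ V̄_t((T−t)·v̄) + ε·π_t⁺, where V̄_t(y) := E[V_t(y, r_t, π_t)]. -/

import Mathlib

open MeasureTheory Set

/-- NEM X payment for net consumption `z` with buy price `pp` and sell price `pm`. -/
noncomputable def NEMPayment (pp pm z : ℝ) : ℝ := pp * max z 0 - pm * max (-z) 0

/-- The superdifferential of a function `f : ℝ → ℝ` (viewed as a concave function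
on `[0, ∞)`) at a point `y`. -/
def superdiff (f : ℝ → ℝ) (y : ℝ) : Set ℝ :=
  {s | ∀ z, 0 ≤ z → f z ≤ f y + s * (z - y)}

/-- Data of the EV-charging / flexible-consumption dynamic program over horizon
`{0, …, T-1}` with `K` flexible loads, under NEM time-of-use prices. -/
structure EVModel (K T : ℕ) (Ω : Type) [MeasurableSpace Ω] where
  /-- underlying probability measure -/
  μ : Measure Ω
  prob : IsProbabilityMeasure μ
  /-- consumption upper bounds -/
  dbar : Fin K → ℝ
  dbar_pos : ∀ i, 0 < dbar i
  /-- device utility functions -/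
  U : Fin K → ℝ → ℝ
  U_strictConcave : ∀ i, StrictConcaveOn ℝ (Icc 0 (dbar i)) (U i)
  U_strictMono : ∀ i, StrictMonoOn (U i) (Icc 0 (dbar i))
  U_diff : ∀ i, ∀ x ∈ Icc 0 (dbar i), DifferentiableWithinAt ℝ (U i) (Icc 0 (dbar i)) x
  U_contDeriv : ∀ i, ContinuousOn (fun x => derivWithin (U i) (Icc 0 (dbar i)) x) (Icc 0 (dbar i))
  U_zero : ∀ i, U i 0 = 0
  /-- renewable processes -/
  r : ℕ → Ω → ℝ
  r_meas : ∀ t, Measurable (r t)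
  r_nonneg : ∀ t ω, 0 ≤ r t ω
  r_int : ∀ t, Integrable (r t) μ
  r_indep : ProbabilityTheory.iIndepFun r μ
  /-- time-of-use buy prices `π_t⁺` -/
  pip : ℕ → ℝ
  /-- time-of-use sell prices `π_t⁻` -/
  pim : ℕ → ℝ
  /-- maximal per-period EV charge -/
  vbar : ℝ
  vbar_pos : 0 < vbar
  /-- per-unit penalty for unmet EV demand at the horizon -/
  γ : ℝ
  /-- `π_off⁻ = min_t π_t⁻` -/
  pioff : ℝ
  pioff_le : ∀ t < T, pioff ≤ pim t
  pioff_attained : ∃ t < T, pioff = pim t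
  /-- assumption A1 -/
  A1 : ∀ t < T, 0 < pim t ∧ pim t ≤ pip t ∧ pip t < γ

namespace EVModel

variable {K T : ℕ} {Ω : Type} [MeasurableSpace Ω]

/-- Stage reward `g_t(x_t, v, d)`. -/
noncomputable def stage (M : EVModel K T Ω) (t : ℕ) (rt v : ℝ) (d : Fin K → ℝ) : ℝ :=
  ∑ i, M.U i (d i) - NEMPayment (M.pip t) (M.pim t) (v + ∑ i, d i - rt)

/-- Feasible decisions `(v, d)` given remaining demand `y`. -/
def feas (M : EVModel K T Ω) (y : ℝ) : Set (ℝ × (Fin K → ℝ)) :=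
  {p | p.1 ∈ Icc 0 (min M.vbar y) ∧ ∀ i, p.2 i ∈ Icc 0 (M.dbar i)}

/-- Value function indexed by `k = T - 1 - t`, the number of remaining periods after
the current one. -/
noncomputable def W (M : EVModel K T Ω) : ℕ → ℝ → ℝ → ℝ
  | 0 => fun y rt => sSup ((fun p : ℝ × (Fin K → ℝ) =>
      M.stage (T - 1) rt p.1 p.2 - M.γ * (y - p.1)) '' M.feas y)
  | (k + 1) => fun y rt => sSup ((fun p : ℝ × (Fin K → ℝ) =>
      M.stage (T - 2 - k) rt p.1 p.2 +
        ∫ ω, M.W k (y - p.1) (M.r (T - 1 - k) ω) ∂M.μ) '' M.feas y)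

/-- Value function `V_t(y, r_t)` (the price argument is determined by `t`). -/
noncomputable def V (M : EVModel K T Ω) (t : ℕ) (y rt : ℝ) : ℝ := M.W (T - 1 - t) y rt

/-- Expected value function `V̄_t(y) = E[V_t(y, r_t, π_t)]`. -/
noncomputable def Vbar (M : EVModel K T Ω) (t : ℕ) (y : ℝ) : ℝ := ∫ ω, M.V t y (M.r t ω) ∂M.μ

/-- Objective of the Bellman equation at time `t` in state `(y, rt)`. -/
noncomputable def bellObj (M : EVModel K T Ω) (t : ℕ) (y rt : ℝ) (p : ℝ × (Fin K → ℝ)) : ℝ :=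
  if t = T - 1 then M.stage t rt p.1 p.2 - M.γ * (y - p.1)
  else M.stage t rt p.1 p.2 + ∫ ω, M.V (t + 1) (y - p.1) (M.r (t + 1) ω) ∂M.μ

/-- `(v, d)` is an optimal solution of the Bellman equation at time `t`. -/
def IsBellmanOpt (M : EVModel K T Ω) (t : ℕ) (y rt : ℝ) (p : ℝ × (Fin K → ℝ)) : Prop :=
  p ∈ M.feas y ∧ ∀ q ∈ M.feas y, M.bellObj t y rt q ≤ M.bellObj t y rt p

/-- Superdifferential `h_t` of the concave expected value function `V̄_t`. -/
noncomputable def h (M : EVModel K T Ω) (t : ℕ) (y : ℝ) : Set ℝ := superdiff (M.Vbar t) y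

end EVModel

section NEMLemmas

lemma NEM_eq (pp pm z : ℝ) : NEMPayment pp pm z = ((pp + pm) * z + (pp - pm) * |z|) / 2 := by
  unfold NEMPayment
  rcases le_total 0 z with h | h
  · rw [max_eq_left h, max_eq_right (neg_nonpos_of_nonneg h), abs_of_nonneg h]; ring
  · rw [max_eq_right h, max_eq_left (neg_nonneg.mpr h), abs_of_nonpos h]; ring

lemma NEM_diff_le {pp pm : ℝ} (hpm : 0 ≤ pm) (hpp : pm ≤ pp) {z z' : ℝ} (h : z ≤ z') :
    NEMPayment pp pm z' - NEMPayment pp pm z ≤ pp * (z' - z) := by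
  rw [NEM_eq, NEM_eq]
  have h1 : |z'| - |z| ≤ z' - z := by
    have h2 := abs_sub_abs_le_abs_sub z' z
    rwa [abs_of_nonneg (by linarith : (0:ℝ) ≤ z' - z)] at h2
  nlinarith [mul_le_mul_of_nonneg_left h1 (by linarith : (0:ℝ) ≤ pp - pm)]

lemma NEM_diff_nonneg {pp pm : ℝ} (hpm : 0 ≤ pm) (hpp : pm ≤ pp) {z z' : ℝ} (h : z ≤ z') :
    0 ≤ NEMPayment pp pm z' - NEMPayment pp pm z := by
  rw [NEM_eq, NEM_eq]
  have h1 : z - z' ≤ |z'| - |z| := by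
    have h2 := abs_sub_abs_le_abs_sub z z'
    rw [abs_sub_comm, abs_of_nonneg (by linarith : (0:ℝ) ≤ z' - z)] at h2
    linarith
  nlinarith [mul_le_mul_of_nonneg_left h1 (by linarith : (0:ℝ) ≤ pp - pm)]

lemma NEM_lip {pp pm : ℝ} (hpm : 0 ≤ pm) (hpp : pm ≤ pp) (z z' : ℝ) :
    |NEMPayment pp pm z - NEMPayment pp pm z'| ≤ pp * |z - z'| := by
  rcases le_total z z' with h | h
  · rw [abs_sub_comm, abs_of_nonneg (NEM_diff_nonneg hpm hpp h), abs_sub_comm z z',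
      abs_of_nonneg (by linarith : (0:ℝ) ≤ z' - z)]
    exact NEM_diff_le hpm hpp h
  · rw [abs_of_nonneg (NEM_diff_nonneg hpm hpp h), abs_of_nonneg (by linarith : (0:ℝ) ≤ z - z')]
    exact NEM_diff_le hpm hpp h

end NEMLemmas

/-- Time index used at level `k` of the recursion `W`. -/
def tIdxAux (T : ℕ) : ℕ → ℕ
  | 0 => T - 1
  | (k + 1) => T - 2 - k

lemma tIdxAux_lt (T : ℕ) (hT : 0 < T) (k : ℕ) : tIdxAux T k < T := by
  cases k <;> simp [tIdxAux] <;> omega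

namespace EVModel

variable {K T : ℕ} {Ω : Type} [MeasurableSpace Ω] (M : EVModel K T Ω)

/-- The objective maximized at level `k` of the recursion `W`. -/
noncomputable def obj : ℕ → ℝ → ℝ → (ℝ × (Fin K → ℝ)) → ℝ
  | 0 => fun y rt p => M.stage (T - 1) rt p.1 p.2 - M.γ * (y - p.1)
  | (k + 1) => fun y rt p => M.stage (T - 2 - k) rt p.1 p.2 +
      ∫ ω, M.W k (y - p.1) (M.r (T - 1 - k) ω) ∂M.μ

/-- The part of the objective not depending on the renewable realization. -/
noncomputable def tail : ℕ → ℝ → (ℝ × (Fin K → ℝ)) → ℝ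
  | 0 => fun y p => -(M.γ * (y - p.1))
  | (k + 1) => fun y p => ∫ ω, M.W k (y - p.1) (M.r (T - 1 - k) ω) ∂M.μ

lemma W_eq (k : ℕ) (y rt : ℝ) : M.W k y rt = sSup (M.obj k y rt '' M.feas y) := by
  cases k <;> rfl

lemma obj_decomp (k : ℕ) (y rt : ℝ) (p : ℝ × (Fin K → ℝ)) :
    M.obj k y rt p = M.stage (tIdxAux T k) rt p.1 p.2 + M.tail k y p := by
  cases k with
  | zero =>
    show M.stage (T - 1) rt p.1 p.2 - M.γ * (y - p.1) =
      M.stage (T - 1) rt p.1 p.2 + -(M.γ * (y - p.1))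
    ring
  | succ n => rfl

lemma gamma_pos (hT : 0 < T) : 0 < M.γ := by
  obtain ⟨h1, h2, h3⟩ := M.A1 0 hT; linarith

lemma pim_pos {t : ℕ} (ht : t < T) : 0 < M.pim t := (M.A1 t ht).1

lemma pim_le_pip {t : ℕ} (ht : t < T) : M.pim t ≤ M.pip t := (M.A1 t ht).2.1

lemma pip_lt_gamma {t : ℕ} (ht : t < T) : M.pip t < M.γ := (M.A1 t ht).2.2

lemma pip_pos {t : ℕ} (ht : t < T) : 0 < M.pip t :=
  lt_of_lt_of_le (M.pim_pos ht) (M.pim_le_pip ht)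

lemma feas_zero_mem {y : ℝ} (hy : 0 ≤ y) : ((0 : ℝ), fun _ => (0 : ℝ)) ∈ M.feas y :=
  ⟨mem_Icc.mpr ⟨le_refl _, le_min M.vbar_pos.le hy⟩,
    fun i => mem_Icc.mpr ⟨le_refl _, (M.dbar_pos i).le⟩⟩

lemma feas_mem {y v : ℝ} (d : Fin K → ℝ) (h0 : 0 ≤ v) (h1 : v ≤ M.vbar) (h2 : v ≤ y)
    (hd : ∀ i, d i ∈ Icc 0 (M.dbar i)) : (v, d) ∈ M.feas y :=
  ⟨mem_Icc.mpr ⟨h0, le_min h1 h2⟩, hd⟩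

lemma feas_empty {y : ℝ} (hy : y < 0) : M.feas y = ∅ := by
  ext p
  simp only [feas, mem_setOf_eq, mem_Icc, mem_empty_iff_false, iff_false, not_and]
  rintro ⟨h1, h2⟩
  exfalso
  have := le_trans h2 (min_le_right _ _)
  linarith

lemma Usum_nonneg : 0 ≤ ∑ i, M.U i (M.dbar i) := by
  apply Finset.sum_nonneg
  intro i _
  have h0 : (0 : ℝ) ∈ Icc 0 (M.dbar i) := mem_Icc.mpr ⟨le_refl _, (M.dbar_pos i).le⟩
  have hd : M.dbar i ∈ Icc (0 : ℝ) (M.dbar i) := mem_Icc.mpr ⟨(M.dbar_pos i).le, le_refl _⟩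
  have := (M.U_strictMono i) h0 hd (M.dbar_pos i)
  rw [M.U_zero i] at this
  linarith

lemma Dsum_nonneg : 0 ≤ ∑ i, M.dbar i := Finset.sum_nonneg fun i _ => (M.dbar_pos i).le

lemma stage_le (hT : 0 < T) {t : ℕ} (ht : t < T) {y : ℝ} {p : ℝ × (Fin K → ℝ)}
    (hp : p ∈ M.feas y) (r : ℝ) :
    M.stage t r p.1 p.2 ≤
      (∑ i, M.U i (M.dbar i)) + M.γ * (M.vbar + ∑ i, M.dbar i) + M.γ * |r| := by
  obtain ⟨hv, hd⟩ := hp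
  rw [mem_Icc] at hv
  have hγ := M.gamma_pos hT
  have hpm := M.pim_pos ht
  have hpp := M.pip_pos ht
  have hpmpp := M.pim_le_pip ht
  have hpmγ : M.pim t ≤ M.γ := le_trans hpmpp (M.pip_lt_gamma ht).le
  have hsum : ∑ i, M.U i (p.2 i) ≤ ∑ i, M.U i (M.dbar i) := by
    apply Finset.sum_le_sum
    intro i _
    have hdi := hd i
    rw [mem_Icc] at hdi
    rcases eq_or_lt_of_le hdi.2 with h | h
    · rw [h]
    · exact ((M.U_strictMono i) (mem_Icc.mpr hdi)
        (mem_Icc.mpr ⟨(M.dbar_pos i).le, le_refl _⟩) h).le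
  simp only [stage]
  have hd0 : 0 ≤ ∑ i, p.2 i := Finset.sum_nonneg fun i _ => ((mem_Icc.mp (hd i)).1)
  have hdB : ∑ i, p.2 i ≤ ∑ i, M.dbar i := Finset.sum_le_sum fun i _ => (mem_Icc.mp (hd i)).2
  have hv1 : p.1 ≤ M.vbar := le_trans hv.2 (min_le_left _ _)
  have hzb : |p.1 + ∑ i, p.2 i - r| ≤ M.vbar + (∑ i, M.dbar i) + |r| := by
    calc |p.1 + ∑ i, p.2 i - r| = |(p.1 + ∑ i, p.2 i) + (-r)| := by rw [sub_eq_add_neg]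
    _ ≤ |p.1 + ∑ i, p.2 i| + |(-r)| := abs_add_le _ _
    _ = |p.1 + ∑ i, p.2 i| + |r| := by rw [abs_neg]
    _ ≤ M.vbar + (∑ i, M.dbar i) + |r| := by
        rw [abs_of_nonneg (by linarith)]; linarith
  have hnem : -NEMPayment (M.pip t) (M.pim t) (p.1 + ∑ i, p.2 i - r) ≤
      M.γ * |p.1 + ∑ i, p.2 i - r| := by
    rw [NEM_eq]
    set z := p.1 + ∑ i, p.2 i - r with hz
    have h1 : 0 ≤ (M.pip t + M.pim t) * (z + |z|) :=
      mul_nonneg (by linarith) (by linarith [neg_abs_le z])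
    have h2 : M.pim t * |z| ≤ M.γ * |z| := mul_le_mul_of_nonneg_right hpmγ (abs_nonneg z)
    nlinarith
  have h3 : M.γ * |p.1 + ∑ i, p.2 i - r| ≤ M.γ * (M.vbar + (∑ i, M.dbar i) + |r|) :=
    mul_le_mul_of_nonneg_left hzb hγ.le
  nlinarith

lemma stage_zero_ge (hT : 0 < T) {t : ℕ} (ht : t < T) (r : ℝ) :
    -(M.γ * |r|) ≤ M.stage t r 0 (fun _ => 0) := by
  have hγpp := (M.pip_lt_gamma ht).le
  have hpm := (M.pim_pos ht).le
  have hpp := (M.pip_pos ht).le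
  have hpmpp := M.pim_le_pip ht
  simp only [stage, M.U_zero, Finset.sum_const_zero]
  have h0 : (0 : ℝ) + (0 : ℝ) - r = -r := by ring
  rw [h0, NEM_eq]
  have h1 := mul_le_mul_of_nonneg_left (neg_le_abs r) (by linarith : (0:ℝ) ≤ M.pip t + M.pim t)
  have h2 := mul_le_mul_of_nonneg_right hγpp (abs_nonneg r)
  rw [abs_neg]
  nlinarith

lemma stage_lip (hT : 0 < T) {t : ℕ} (ht : t < T) (v : ℝ) (d : Fin K → ℝ) (r r' : ℝ) :
    |M.stage t r v d - M.stage t r' v d| ≤ M.γ * |r - r'| := by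
  simp only [stage]
  have heq : (∑ i, M.U i (d i) - NEMPayment (M.pip t) (M.pim t) (v + ∑ i, d i - r)) -
      (∑ i, M.U i (d i) - NEMPayment (M.pip t) (M.pim t) (v + ∑ i, d i - r')) =
      NEMPayment (M.pip t) (M.pim t) (v + ∑ i, d i - r') -
        NEMPayment (M.pip t) (M.pim t) (v + ∑ i, d i - r) := by ring
  rw [heq]
  have h := NEM_lip (M.pim_pos ht).le (M.pim_le_pip ht) (v + ∑ i, d i - r') (v + ∑ i, d i - r)
  have h2 : (v + ∑ i, d i - r') - (v + ∑ i, d i - r) = r - r' := by ring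
  rw [h2] at h
  exact le_trans h (mul_le_mul_of_nonneg_right (M.pip_lt_gamma ht).le (abs_nonneg _))

lemma W_abs_bound {k : ℕ} {C : ℝ} (hC0 : 0 ≤ C)
    (hub : ∀ y r p, p ∈ M.feas y → M.obj k y r p ≤ C * (1 + |y| + |r|))
    (hlb : ∀ y r, 0 ≤ y → -(C * (1 + |y| + |r|)) ≤ M.obj k y r (0, fun _ => 0)) :
    ∀ y r, |M.W k y r| ≤ C * (1 + |y| + |r|) := by
  intro y r
  have hnn : 0 ≤ C * (1 + |y| + |r|) := mul_nonneg hC0 (by positivity)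
  rw [abs_le]
  constructor
  · rcases lt_or_ge y 0 with hy | hy
    · rw [M.W_eq, M.feas_empty hy, Set.image_empty, Real.sSup_empty]; linarith
    · rw [M.W_eq]
      exact le_trans (hlb y r hy)
        (le_csSup ⟨C * (1 + |y| + |r|), by rintro x ⟨p, hp, rfl⟩; exact hub y r p hp⟩
          (mem_image_of_mem _ (M.feas_zero_mem hy)))
  · rw [M.W_eq]
    exact Real.sSup_le (by rintro x ⟨p, hp, rfl⟩; exact hub y r p hp) hnn

lemma W_lip (hT : 0 < T) {k : ℕ} {C : ℝ}
    (hub : ∀ y r p, p ∈ M.feas y → M.obj k y r p ≤ C * (1 + |y| + |r|)) :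
    ∀ y r r', |M.W k y r - M.W k y r'| ≤ M.γ * |r - r'| := by
  have hγ := (M.gamma_pos hT).le
  have haux : ∀ y r r', M.W k y r ≤ M.W k y r' + M.γ * |r - r'| := by
    intro y r r'
    rcases lt_or_ge y 0 with hy | hy
    · rw [M.W_eq, M.W_eq, M.feas_empty hy]
      simp only [Set.image_empty, Real.sSup_empty]
      have : 0 ≤ M.γ * |r - r'| := mul_nonneg hγ (abs_nonneg _)
      linarith
    · rw [M.W_eq, M.W_eq]
      apply csSup_le ((nonempty_of_mem (M.feas_zero_mem hy)).image _)
      rintro x ⟨p, hp, rfl⟩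
      have hd : M.obj k y r p ≤ M.obj k y r' p + M.γ * |r - r'| := by
        rw [M.obj_decomp, M.obj_decomp]
        have hl := M.stage_lip hT (tIdxAux_lt T hT k) p.1 p.2 r r'
        linarith [le_abs_self (M.stage (tIdxAux T k) r p.1 p.2 -
          M.stage (tIdxAux T k) r' p.1 p.2)]
      exact le_trans hd (add_le_add_left
        (le_csSup ⟨C * (1 + |y| + |r'|), by rintro x ⟨q, hq, rfl⟩; exact hub y r' q hq⟩
          (mem_image_of_mem _ hp)) _)
  intro y r r'
  rw [abs_sub_le_iff]
  constructor
  · linarith [haux y r r']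
  · have h := haux y r' r
    rw [abs_sub_comm r' r] at h
    linarith

lemma W_integrable_aux (hT : 0 < T) {k : ℕ} {C : ℝ} (hC0 : 0 ≤ C)
    (hub : ∀ y r p, p ∈ M.feas y → M.obj k y r p ≤ C * (1 + |y| + |r|))
    (hlb : ∀ y r, 0 ≤ y → -(C * (1 + |y| + |r|)) ≤ M.obj k y r (0, fun _ => 0)) :
    ∀ (s : ℕ) (y : ℝ), Integrable (fun ω => M.W k y (M.r s ω)) M.μ := by
  intro s y
  haveI := M.prob
  have habs := M.W_abs_bound hC0 hub hlb
  have hlip := M.W_lip hT hub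
  have hcont : Continuous (fun rr => M.W k y rr) := by
    have hL : LipschitzWith (Real.toNNReal M.γ) (fun rr => M.W k y rr) :=
      LipschitzWith.of_dist_le_mul (fun a b => by
        rw [Real.dist_eq, Real.dist_eq, Real.coe_toNNReal _ (M.gamma_pos hT).le]
        exact hlip y a b)
    exact hL.continuous
  refine Integrable.mono' ((integrable_const (C * (1 + |y|))).add ((M.r_int s).abs.const_mul C))
    ((hcont.measurable.comp (M.r_meas s)).aestronglyMeasurable) ?_
  filter_upwards with ω
  rw [Real.norm_eq_abs]
  calc |M.W k y (M.r s ω)| ≤ C * (1 + |y| + |M.r s ω|) := habs y _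
    _ = C * (1 + |y|) + C * |M.r s ω| := by ring

lemma W_struct (hT : 0 < T) : ∀ k : ℕ, ∃ C : ℝ, 0 ≤ C ∧
    (∀ y r p, p ∈ M.feas y → M.obj k y r p ≤ C * (1 + |y| + |r|)) ∧
    (∀ y r, 0 ≤ y → -(C * (1 + |y| + |r|)) ≤ M.obj k y r (0, fun _ => 0)) := by
  have hγ := M.gamma_pos hT
  have hU := M.Usum_nonneg
  have hD := M.Dsum_nonneg
  have hvb := M.vbar_pos
  intro k
  induction k with
  | zero =>
    set C0 : ℝ := (∑ i, M.U i (M.dbar i)) + M.γ * (M.vbar + ∑ i, M.dbar i) +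
      M.γ * (1 + M.vbar) + M.γ with hC0def
    have hq1 : 0 ≤ M.γ * (M.vbar + ∑ i, M.dbar i) := mul_nonneg hγ.le (by linarith)
    have hq2 : 0 ≤ M.γ * (1 + M.vbar) := mul_nonneg hγ.le (by linarith)
    have hγC0 : M.γ ≤ C0 := by rw [hC0def]; linarith
    have hC00 : 0 ≤ C0 := by linarith
    refine ⟨C0, hC00, ?_, ?_⟩
    · intro y r p hp
      have hst := M.stage_le hT (show T - 1 < T by omega) hp r
      obtain ⟨hv, _⟩ := hp
      rw [mem_Icc] at hv
      have hv1 : p.1 ≤ M.vbar := le_trans hv.2 (min_le_left _ _)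
      have hobj : M.obj 0 y r p = M.stage (T - 1) r p.1 p.2 - M.γ * (y - p.1) := rfl
      rw [hobj]
      have h1 : -(M.γ * (y - p.1)) ≤ M.γ * (|y| + M.vbar) := by
        have hx : -(y - p.1) ≤ |y| + M.vbar := by
          have := neg_le_abs y; linarith
        calc -(M.γ * (y - p.1)) = M.γ * (-(y - p.1)) := by ring
        _ ≤ M.γ * (|y| + M.vbar) := mul_le_mul_of_nonneg_left hx hγ.le
      have h2 : M.γ * |r| ≤ C0 * |r| := mul_le_mul_of_nonneg_right hγC0 (abs_nonneg r)
      have h3 : M.γ * |y| ≤ C0 * |y| := mul_le_mul_of_nonneg_right hγC0 (abs_nonneg y)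
      have hexp : C0 * (1 + |y| + |r|) = C0 + C0 * |y| + C0 * |r| := by ring
      rw [hexp, hC0def]
      have h1' : M.γ * (|y| + M.vbar) = M.γ * |y| + M.γ * M.vbar := by ring
      rw [hC0def] at h2 h3
      nlinarith
    · intro y r hy
      have hst := M.stage_zero_ge hT (show T - 1 < T by omega) r
      have hobj : M.obj 0 y r (0, fun _ => 0) =
          M.stage (T - 1) r 0 (fun _ => 0) - M.γ * (y - 0) := rfl
      rw [hobj]
      have h2 : M.γ * |r| ≤ C0 * |r| := mul_le_mul_of_nonneg_right hγC0 (abs_nonneg r)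
      have h3 : M.γ * y ≤ C0 * |y| := by
        rw [abs_of_nonneg hy]
        exact mul_le_mul_of_nonneg_right hγC0 hy
      have hexp : C0 * (1 + |y| + |r|) = C0 + C0 * |y| + C0 * |r| := by ring
      rw [hexp]
      linarith
  | succ k ih =>
    obtain ⟨C, hC0, hub, hlb⟩ := ih
    have habs := M.W_abs_bound hC0 hub hlb
    have hint := M.W_integrable_aux hT hC0 hub hlb
    haveI := M.prob
    set E : ℝ := ∫ ω, |M.r (T - 1 - k) ω| ∂M.μ with hEdef
    have hE0 : 0 ≤ E := by
      rw [hEdef]; exact integral_nonneg fun ω => abs_nonneg _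
    have hIb : ∀ y' : ℝ, |∫ ω, M.W k y' (M.r (T - 1 - k) ω) ∂M.μ| ≤ C * (1 + |y'|) + C * E := by
      intro y'
      have h1 : |∫ ω, M.W k y' (M.r (T - 1 - k) ω) ∂M.μ| ≤
          ∫ ω, |M.W k y' (M.r (T - 1 - k) ω)| ∂M.μ := by
        simpa [Real.norm_eq_abs] using
          norm_integral_le_integral_norm (μ := M.μ) (fun ω => M.W k y' (M.r (T - 1 - k) ω))
      have h2 : ∫ ω, |M.W k y' (M.r (T - 1 - k) ω)| ∂M.μ ≤
          ∫ ω, (C * (1 + |y'|) + C * |M.r (T - 1 - k) ω|) ∂M.μ := by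
        apply integral_mono ((hint (T - 1 - k) y').abs)
          ((integrable_const _).add ((M.r_int _).abs.const_mul C))
        intro ω
        calc |M.W k y' (M.r (T - 1 - k) ω)| ≤ C * (1 + |y'| + |M.r (T - 1 - k) ω|) := habs y' _
        _ = C * (1 + |y'|) + C * |M.r (T - 1 - k) ω| := by ring
      have h3 : ∫ ω, (C * (1 + |y'|) + C * |M.r (T - 1 - k) ω|) ∂M.μ =
          C * (1 + |y'|) + C * E := by
        rw [integral_add (integrable_const _) ((M.r_int _).abs.const_mul C), integral_const,
          integral_const_mul, ← hEdef]
        simp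
      linarith
    set C' : ℝ := (∑ i, M.U i (M.dbar i)) + M.γ * (M.vbar + ∑ i, M.dbar i) +
      M.γ * (1 + M.vbar) + M.γ + C * (1 + M.vbar + E) + C with hC'def
    have hq1 : 0 ≤ M.γ * (M.vbar + ∑ i, M.dbar i) := mul_nonneg hγ.le (by linarith)
    have hq2 : 0 ≤ M.γ * (1 + M.vbar) := mul_nonneg hγ.le (by linarith)
    have hq3 : 0 ≤ C * (1 + M.vbar + E) := mul_nonneg hC0 (by linarith)
    have hγC' : M.γ ≤ C' := by rw [hC'def]; linarith
    have hCC' : C ≤ C' := by rw [hC'def]; linarith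
    have hC'0 : 0 ≤ C' := by linarith
    refine ⟨C', hC'0, ?_, ?_⟩
    · intro y r p hp
      have hst := M.stage_le hT (show T - 2 - k < T by omega) hp r
      obtain ⟨hv, _⟩ := hp
      rw [mem_Icc] at hv
      have hv1 : p.1 ≤ M.vbar := le_trans hv.2 (min_le_left _ _)
      have hobj : M.obj (k + 1) y r p = M.stage (T - 2 - k) r p.1 p.2 +
          ∫ ω, M.W k (y - p.1) (M.r (T - 1 - k) ω) ∂M.μ := rfl
      rw [hobj]
      have hI := hIb (y - p.1)
      have hys : |y - p.1| ≤ |y| + M.vbar := by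
        calc |y - p.1| = |y + (-p.1)| := by rw [sub_eq_add_neg]
        _ ≤ |y| + |(-p.1)| := abs_add_le _ _
        _ = |y| + p.1 := by rw [abs_neg, abs_of_nonneg hv.1]
        _ ≤ |y| + M.vbar := by linarith
      have hm1 : C * |y - p.1| ≤ C * (|y| + M.vbar) := mul_le_mul_of_nonneg_left hys hC0
      have hm2 : M.γ * |r| ≤ C' * |r| := mul_le_mul_of_nonneg_right hγC' (abs_nonneg r)
      have hm3 : C * |y| ≤ C' * |y| := mul_le_mul_of_nonneg_right hCC' (abs_nonneg y)
      have hI2 : ∫ ω, M.W k (y - p.1) (M.r (T - 1 - k) ω) ∂M.μ ≤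
          C * (1 + |y - p.1|) + C * E := le_trans (le_abs_self _) hI
      have hexp : C' * (1 + |y| + |r|) = C' + C' * |y| + C' * |r| := by ring
      rw [hexp, hC'def]
      rw [hC'def] at hm2 hm3
      nlinarith
    · intro y r hy
      have hst := M.stage_zero_ge hT (show T - 2 - k < T by omega) r
      have hobj : M.obj (k + 1) y r (0, fun _ => 0) = M.stage (T - 2 - k) r 0 (fun _ => 0) +
          ∫ ω, M.W k (y - 0) (M.r (T - 1 - k) ω) ∂M.μ := rfl
      rw [hobj]
      simp only [sub_zero]
      have hI := hIb y
      have hI2 : -(C * (1 + |y|) + C * E) ≤ ∫ ω, M.W k y (M.r (T - 1 - k) ω) ∂M.μ := by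
        have := neg_abs_le (∫ ω, M.W k y (M.r (T - 1 - k) ω) ∂M.μ)
        linarith
      have hm2 : M.γ * |r| ≤ C' * |r| := mul_le_mul_of_nonneg_right hγC' (abs_nonneg r)
      have hm3 : C * |y| ≤ C' * |y| := mul_le_mul_of_nonneg_right hCC' (abs_nonneg y)
      have hexp : C' * (1 + |y| + |r|) = C' + C' * |y| + C' * |r| := by ring
      rw [hexp, hC'def]
      rw [hC'def] at hm2 hm3
      nlinarith

lemma W_bddAbove (hT : 0 < T) (k : ℕ) (y r : ℝ) : BddAbove (M.obj k y r '' M.feas y) := by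
  obtain ⟨C, _, hub, _⟩ := M.W_struct hT k
  exact ⟨C * (1 + |y| + |r|), by rintro x ⟨p, hp, rfl⟩; exact hub y r p hp⟩

lemma W_integrable (hT : 0 < T) (k : ℕ) (s : ℕ) (y : ℝ) :
    Integrable (fun ω => M.W k y (M.r s ω)) M.μ := by
  obtain ⟨C, hC0, hub, hlb⟩ := M.W_struct hT k
  exact M.W_integrable_aux hT hC0 hub hlb s y

lemma W_key (hT : 0 < T) : ∀ k : ℕ, k + 1 ≤ T →
    (∀ s, T - 1 - k ≤ s → s ≤ T - 2 → M.pip (s + 1) ≤ M.pip s) →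
    ∀ (r ε : ℝ), 0 ≤ ε → ε ≤ ((k : ℝ) + 1) * M.vbar →
    M.W k (((k : ℝ) + 1) * M.vbar - ε) r ≤
      M.W k (((k : ℝ) + 1) * M.vbar) r + ε * M.pip (T - 1 - k) := by
  intro k
  induction k with
  | zero =>
    intro hk hpr r ε hε0 hε1
    simp only [Nat.cast_zero, zero_add, one_mul, Nat.sub_zero] at hε1 ⊢
    have hT1 : T - 1 < T := by omega
    have hy0 : 0 ≤ M.vbar - ε := by linarith
    rw [M.W_eq, M.W_eq]
    apply csSup_le ((nonempty_of_mem (M.feas_zero_mem hy0)).image _)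
    rintro x ⟨p, hp, rfl⟩
    have hp1 := hp.1
    rw [mem_Icc] at hp1
    have hv2 : p.1 ≤ M.vbar - ε := le_trans hp1.2 (min_le_right _ _)
    have hq : (p.1 + ε, p.2) ∈ M.feas M.vbar :=
      M.feas_mem p.2 (by linarith [hp1.1]) (by linarith) (by linarith) hp.2
    have hstage : M.stage (T - 1) r p.1 p.2 ≤
        M.stage (T - 1) r (p.1 + ε) p.2 + M.pip (T - 1) * ε := by
      simp only [stage]
      have hd := NEM_diff_le (M.pim_pos hT1).le (M.pim_le_pip hT1)
        (show p.1 + ∑ i, p.2 i - r ≤ p.1 + ε + ∑ i, p.2 i - r by linarith)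
      have he : (p.1 + ε + ∑ i, p.2 i - r) - (p.1 + ∑ i, p.2 i - r) = ε := by ring
      rw [he] at hd
      linarith
    have hobj : M.obj 0 (M.vbar - ε) r p ≤
        M.obj 0 M.vbar r (p.1 + ε, p.2) + ε * M.pip (T - 1) := by
      show M.stage (T - 1) r p.1 p.2 - M.γ * (M.vbar - ε - p.1) ≤
        (M.stage (T - 1) r (p.1 + ε) p.2 - M.γ * (M.vbar - (p.1 + ε))) + ε * M.pip (T - 1)
      have he2 : M.vbar - ε - p.1 = M.vbar - (p.1 + ε) := by ring
      rw [he2]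
      linarith
    exact le_trans hobj (add_le_add_left
      (le_csSup (M.W_bddAbove hT 0 M.vbar r) (mem_image_of_mem _ hq)) _)
  | succ k ih =>
    intro hk hpr r ε hε0 hε1
    have hk' : k + 1 ≤ T := by omega
    have hpr' : ∀ s, T - 1 - k ≤ s → s ≤ T - 2 → M.pip (s + 1) ≤ M.pip s :=
      fun s h1 h2 => hpr s (by omega) h2
    have hτT : T - 2 - k < T := by omega
    have hidx : T - 1 - (k + 1) = T - 2 - k := by omega
    have hsucc : (T - 2 - k) + 1 = T - 1 - k := by omega
    have hprτ : M.pip (T - 1 - k) ≤ M.pip (T - 2 - k) := by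
      have h := hpr (T - 2 - k) (by omega) (by omega)
      rwa [hsucc] at h
    have hc : ((k + 1 : ℕ) : ℝ) + 1 = (k : ℝ) + 2 := by push_cast; ring
    rw [hc] at hε1 ⊢
    rw [hidx]
    have hvb := M.vbar_pos
    have hkv : (0 : ℝ) ≤ (k : ℝ) * M.vbar := mul_nonneg (Nat.cast_nonneg k) hvb.le
    have hy0 : 0 ≤ ((k : ℝ) + 2) * M.vbar - ε := by linarith
    haveI := M.prob
    rw [M.W_eq, M.W_eq]
    apply csSup_le ((nonempty_of_mem (M.feas_zero_mem hy0)).image _)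
    rintro x ⟨p, hp, rfl⟩
    have hp1 := hp.1
    rw [mem_Icc] at hp1
    obtain ⟨hv0, hvle⟩ := hp1
    have hv1 : p.1 ≤ M.vbar := le_trans hvle (min_le_left _ _)
    have hv2 : p.1 ≤ ((k : ℝ) + 2) * M.vbar - ε := le_trans hvle (min_le_right _ _)
    rcases le_total ε (M.vbar - p.1) with hcase | hcase
    · have hq : (p.1 + ε, p.2) ∈ M.feas (((k : ℝ) + 2) * M.vbar) :=
        M.feas_mem p.2 (by linarith) (by linarith) (by linarith) hp.2
      have hstage : M.stage (T - 2 - k) r p.1 p.2 ≤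
          M.stage (T - 2 - k) r (p.1 + ε) p.2 + M.pip (T - 2 - k) * ε := by
        simp only [stage]
        have hd := NEM_diff_le (M.pim_pos hτT).le (M.pim_le_pip hτT)
          (show p.1 + ∑ i, p.2 i - r ≤ p.1 + ε + ∑ i, p.2 i - r by linarith)
        have he : (p.1 + ε + ∑ i, p.2 i - r) - (p.1 + ∑ i, p.2 i - r) = ε := by ring
        rw [he] at hd
        linarith
      have hobj : M.obj (k + 1) (((k : ℝ) + 2) * M.vbar - ε) r p ≤
          M.obj (k + 1) (((k : ℝ) + 2) * M.vbar) r (p.1 + ε, p.2) + ε * M.pip (T - 2 - k) := by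
        show M.stage (T - 2 - k) r p.1 p.2 +
            (∫ ω, M.W k (((k : ℝ) + 2) * M.vbar - ε - p.1) (M.r (T - 1 - k) ω) ∂M.μ) ≤
          (M.stage (T - 2 - k) r (p.1 + ε) p.2 +
            ∫ ω, M.W k (((k : ℝ) + 2) * M.vbar - (p.1 + ε)) (M.r (T - 1 - k) ω) ∂M.μ) +
            ε * M.pip (T - 2 - k)
        have harg : ((k : ℝ) + 2) * M.vbar - ε - p.1 = ((k : ℝ) + 2) * M.vbar - (p.1 + ε) := by
          ring
        rw [harg]
        linarith
      exact le_trans hobj (add_le_add_left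
        (le_csSup (M.W_bddAbove hT (k + 1) _ r) (mem_image_of_mem _ hq)) _)
    · set ε' : ℝ := ε - (M.vbar - p.1) with hε'def
      have hε'0 : 0 ≤ ε' := by rw [hε'def]; linarith
      have hε'le : ε' ≤ ((k : ℝ) + 1) * M.vbar := by rw [hε'def]; linarith
      have hq : (M.vbar, p.2) ∈ M.feas (((k : ℝ) + 2) * M.vbar) :=
        M.feas_mem p.2 hvb.le le_rfl (by linarith) hp.2
      have hstage : M.stage (T - 2 - k) r p.1 p.2 ≤
          M.stage (T - 2 - k) r M.vbar p.2 + M.pip (T - 2 - k) * (M.vbar - p.1) := by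
        simp only [stage]
        have hd := NEM_diff_le (M.pim_pos hτT).le (M.pim_le_pip hτT)
          (show p.1 + ∑ i, p.2 i - r ≤ M.vbar + ∑ i, p.2 i - r by linarith)
        have he : (M.vbar + ∑ i, p.2 i - r) - (p.1 + ∑ i, p.2 i - r) = M.vbar - p.1 := by ring
        rw [he] at hd
        linarith
      have hIH : ∀ rr, M.W k (((k : ℝ) + 1) * M.vbar - ε') rr ≤
          M.W k (((k : ℝ) + 1) * M.vbar) rr + ε' * M.pip (T - 1 - k) :=
        fun rr => ih hk' hpr' rr ε' hε'0 hε'le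
      have hmono : ∫ ω, M.W k (((k : ℝ) + 1) * M.vbar - ε') (M.r (T - 1 - k) ω) ∂M.μ ≤
          (∫ ω, M.W k (((k : ℝ) + 1) * M.vbar) (M.r (T - 1 - k) ω) ∂M.μ) +
            ε' * M.pip (T - 1 - k) := by
        have h1 : ∫ ω, M.W k (((k : ℝ) + 1) * M.vbar - ε') (M.r (T - 1 - k) ω) ∂M.μ ≤
            ∫ ω, (M.W k (((k : ℝ) + 1) * M.vbar) (M.r (T - 1 - k) ω) +
              ε' * M.pip (T - 1 - k)) ∂M.μ :=
          integral_mono (M.W_integrable hT k _ _)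
            ((M.W_integrable hT k _ _).add (integrable_const _)) (fun ω => hIH _)
        have h2 : ∫ ω, (M.W k (((k : ℝ) + 1) * M.vbar) (M.r (T - 1 - k) ω) +
            ε' * M.pip (T - 1 - k)) ∂M.μ =
            (∫ ω, M.W k (((k : ℝ) + 1) * M.vbar) (M.r (T - 1 - k) ω) ∂M.μ) +
              ε' * M.pip (T - 1 - k) := by
          rw [integral_add (M.W_integrable hT k _ _) (integrable_const _), integral_const]
          simp
        rw [h2] at h1
        exact h1
      have hobj : M.obj (k + 1) (((k : ℝ) + 2) * M.vbar - ε) r p ≤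
          M.obj (k + 1) (((k : ℝ) + 2) * M.vbar) r (M.vbar, p.2) + ε * M.pip (T - 2 - k) := by
        show M.stage (T - 2 - k) r p.1 p.2 +
            (∫ ω, M.W k (((k : ℝ) + 2) * M.vbar - ε - p.1) (M.r (T - 1 - k) ω) ∂M.μ) ≤
          (M.stage (T - 2 - k) r M.vbar p.2 +
            ∫ ω, M.W k (((k : ℝ) + 2) * M.vbar - M.vbar) (M.r (T - 1 - k) ω) ∂M.μ) +
            ε * M.pip (T - 2 - k)
        have harg1 : ((k : ℝ) + 2) * M.vbar - ε - p.1 = ((k : ℝ) + 1) * M.vbar - ε' := by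
          rw [hε'def]; ring
        have harg2 : ((k : ℝ) + 2) * M.vbar - M.vbar = ((k : ℝ) + 1) * M.vbar := by ring
        rw [harg1, harg2]
        have hx : ε' * M.pip (T - 1 - k) ≤ ε' * M.pip (T - 2 - k) :=
          mul_le_mul_of_nonneg_left hprτ hε'0
        have hsplit : M.pip (T - 2 - k) * (M.vbar - p.1) + ε' * M.pip (T - 2 - k) =
            ε * M.pip (T - 2 - k) := by rw [hε'def]; ring
        linarith
      exact le_trans hobj (add_le_add_left
        (le_csSup (M.W_bddAbove hT (k + 1) _ r) (mem_image_of_mem _ hq)) _)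

end EVModel
/-- **Theorem 2 (key inequality).**
Let `t ≤ T - 1` and suppose `π_{s+1}⁺ ≤ π_s⁺` for all `s ∈ {t, …, T-2}`.  Then for
every `ε ∈ (0, (T - t) v̄]`, the expected value function satisfies
`V̄_t((T - t) v̄ - ε) ≤ V̄_t((T - t) v̄) + ε π_t⁺`. -/
theorem thm2_key_inequality (K T : ℕ) (Ω : Type) [MeasurableSpace Ω]
    (M : EVModel K T Ω) (t : ℕ) (ht : t < T)
    (hprice : ∀ s, t ≤ s → s ≤ T - 2 → M.pip (s + 1) ≤ M.pip s)
    (ε : ℝ) (hε : 0 < ε) (hε' : ε ≤ ((T - t : ℕ) : ℝ) * M.vbar) :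
    M.Vbar t (((T - t : ℕ) : ℝ) * M.vbar - ε) ≤
      M.Vbar t (((T - t : ℕ) : ℝ) * M.vbar) + ε * M.pip t := by
  have hT0 : 0 < T := by omega
  have hk1 : (T - 1 - t) + 1 ≤ T := by omega
  have hpr : ∀ s, T - 1 - (T - 1 - t) ≤ s → s ≤ T - 2 → M.pip (s + 1) ≤ M.pip s := by
    intro s h1 h2
    exact hprice s (by omega) h2
  have hkey := M.W_key hT0 (T - 1 - t) hk1 hpr
  have hidx : T - 1 - (T - 1 - t) = t := by omega
  rw [hidx] at hkey
  have hcast : ((T - t : ℕ) : ℝ) = ((T - 1 - t : ℕ) : ℝ) + 1 := by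
    have h : T - t = (T - 1 - t) + 1 := by omega
    rw [h]; push_cast; ring
  rw [hcast] at hε' ⊢
  haveI := M.prob
  have hVb : ∀ y : ℝ, M.Vbar t y = ∫ ω, M.W (T - 1 - t) y (M.r t ω) ∂M.μ := fun _ => rfl
  rw [hVb, hVb]
  have h1 : ∫ ω, M.W (T - 1 - t) ((((T - 1 - t : ℕ) : ℝ) + 1) * M.vbar - ε) (M.r t ω) ∂M.μ ≤
      ∫ ω, (M.W (T - 1 - t) ((((T - 1 - t : ℕ) : ℝ) + 1) * M.vbar) (M.r t ω) +
        ε * M.pip t) ∂M.μ :=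
    integral_mono (M.W_integrable hT0 _ t _) ((M.W_integrable hT0 _ t _).add (integrable_const _))
      (fun ω => hkey (M.r t ω) ε hε.le hε')
  have h2 : ∫ ω, (M.W (T - 1 - t) ((((T - 1 - t : ℕ) : ℝ) + 1) * M.vbar) (M.r t ω) +
      ε * M.pip t) ∂M.μ =
      (∫ ω, M.W (T - 1 - t) ((((T - 1 - t : ℕ) : ℝ) + 1) * M.vbar) (M.r t ω) ∂M.μ) +
        ε * M.pip t := by
    rw [integral_add (M.W_integrable hT0 _ t _) (integrable_const _), integral_const]
    simp
  linarith
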